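/- Let T be a perfect binary tree of height h = 3m + 2 with m ≥ 0. Then the minimum size of a maximal independent set of T equals 2·(8^(m+1) - 1)/7. -/

import Mathlib

/-- The perfect binary tree of height `h`, on vertex set `Fin (2^(h+1) - 1)`
with heap indexing: the children of vertex `i` are `2*i+1` and `2*i+2`. -/
def perfectBinaryTree (h : ℕ) : SimpleGraph (Fin (2 ^ (h + 1) - 1)) :=
  SimpleGraph.fromRel (fun i j => (j : ℕ) = 2 * (i : ℕ) + 1 ∨ (j : ℕ) = 2 * (i : ℕ) + 2)

/-- The height of a vertex (in heap indexing) is `log₂ (v+1)`. -/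
def heapHeight {n : ℕ} (v : Fin n) : ℕ := Nat.log 2 ((v : ℕ) + 1)

variable {V : Type*}

/-- A vertex cover of a graph: a set of vertices meeting every edge. -/
def SimpleGraph.IsVertexCover' (G : SimpleGraph V) (C : Finset V) : Prop :=
  ∀ ⦃u v : V⦄, G.Adj u v → u ∈ C ∨ v ∈ C

/-- A minimal vertex cover: no proper subset is a vertex cover. -/
def SimpleGraph.IsMinimalVertexCover (G : SimpleGraph V) (C : Finset V) : Prop :=
  G.IsVertexCover' C ∧ ∀ D : Finset V, D ⊂ C → ¬ G.IsVertexCover' D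

/-- The number of minimal vertex covers of a graph. -/
noncomputable def SimpleGraph.numMinimalVertexCovers (G : SimpleGraph V) : ℕ :=
  {C : Finset V | G.IsMinimalVertexCover C}.ncard

/-- The vertex cover number: smallest cardinality of a vertex cover. -/
noncomputable def SimpleGraph.vertexCoverNumber (G : SimpleGraph V) : ℕ :=
  sInf {k | ∃ C : Finset V, G.IsVertexCover' C ∧ C.card = k}

/-- An independent set: no two of its vertices are adjacent. -/
def SimpleGraph.IsIndepSet' (G : SimpleGraph V) (W : Finset V) : Prop :=
  ∀ u ∈ W, ∀ v ∈ W, ¬ G.Adj u v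

/-- A maximal independent set. -/
def SimpleGraph.IsMaximalIndepSet (G : SimpleGraph V) (W : Finset V) : Prop :=
  G.IsIndepSet' W ∧ ∀ D : Finset V, W ⊂ D → ¬ G.IsIndepSet' D

/-- The independence number: largest cardinality of an independent set. -/
noncomputable def SimpleGraph.indepNumber (G : SimpleGraph V) : ℕ :=
  sSup {k | ∃ W : Finset V, G.IsIndepSet' W ∧ W.card = k}

/-- The minimum size of a maximal independent set. -/
noncomputable def SimpleGraph.minMaximalIndepSetSize (G : SimpleGraph V) : ℕ :=
  sInf {k | ∃ W : Finset V, G.IsMaximalIndepSet W ∧ W.card = k}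

/-- The matching number: largest cardinality of a set of pairwise disjoint edges. -/
noncomputable def SimpleGraph.matchingNumber (G : SimpleGraph V) : ℕ :=
  sSup {k | ∃ M : Finset (Sym2 V), (↑M : Set (Sym2 V)) ⊆ G.edgeSet ∧
    ((↑M : Set (Sym2 V)).Pairwise fun e f => ∀ v : V, v ∈ e → v ∉ f) ∧ M.card = k}

namespace PBTaux

lemma log_two_mul {a : ℕ} (ha : a ≠ 0) : Nat.log 2 (2 * a) = Nat.log 2 a + 1 := by
  rw [mul_comm]; exact Nat.log_mul_base one_lt_two ha

lemma log_two_mul_add_one {a : ℕ} (ha : a ≠ 0) :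
    Nat.log 2 (2 * a + 1) = Nat.log 2 a + 1 := by
  have h1 := Nat.pow_log_le_self 2 ha
  have h2 := Nat.lt_pow_succ_log_self one_lt_two a
  refine Nat.log_eq_of_pow_le_of_lt_pow ?_ ?_
  · rw [pow_succ]; omega
  · have : 2 ^ (Nat.log 2 a + 1 + 1) = 2 ^ (Nat.log 2 a + 1) * 2 := by ring
    rw [this, pow_succ] at *
    omega

/-- descendant relation in successor-coordinates -/
def Desc (a x : ℕ) : Prop := ∃ d, x / 2 ^ d = a

instance (a x : ℕ) : Decidable (Desc a x) := by
  unfold Desc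
  refine decidable_of_iff (∃ d ≤ x, x / 2 ^ d = a) ?_
  constructor
  · rintro ⟨d, _, hd⟩; exact ⟨d, hd⟩
  · rintro ⟨d, hd⟩
    by_cases h : d ≤ x
    · exact ⟨d, h, hd⟩
    · refine ⟨x, le_rfl, ?_⟩
      have hx : x < 2 ^ d := lt_of_lt_of_le (Nat.lt_two_pow_self (n := x)) (Nat.pow_le_pow_right (by norm_num) (by omega))
      have hx' : x < 2 ^ x := Nat.lt_two_pow_self (n := x)
      rw [Nat.div_eq_of_lt hx] at hd
      rw [Nat.div_eq_of_lt hx', ← hd]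

lemma desc_le {a x : ℕ} (h : Desc a x) : a ≤ x := by
  obtain ⟨d, hd⟩ := h; exact hd ▸ Nat.div_le_self x (2 ^ d)

lemma log_of_desc {a x : ℕ} (ha : a ≠ 0) {d : ℕ} (hd : x / 2 ^ d = a) :
    Nat.log 2 x = Nat.log 2 a + d := by
  have h2 : (0:ℕ) < 2 ^ d := Nat.pow_pos (n := d) (by norm_num)
  have hle : a * 2 ^ d ≤ x := by
    rw [← hd]; exact Nat.div_mul_le_self x (2 ^ d)
  have hlt : x < (a + 1) * 2 ^ d := by
    have hm := Nat.mod_add_div x (2 ^ d)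
    have hl : x % 2 ^ d < 2 ^ d := Nat.mod_lt x h2
    rw [hd] at hm
    have h3 : (a + 1) * 2 ^ d = a * 2 ^ d + 2 ^ d := by ring
    have h4 : 2 ^ d * a = a * 2 ^ d := mul_comm _ _
    omega
  refine Nat.log_eq_of_pow_le_of_lt_pow ?_ ?_
  · calc 2 ^ (Nat.log 2 a + d) = 2 ^ Nat.log 2 a * 2 ^ d := by rw [pow_add]
    _ ≤ a * 2 ^ d := Nat.mul_le_mul_right _ (Nat.pow_log_le_self 2 ha)
    _ ≤ x := hle
  · calc x < (a + 1) * 2 ^ d := hlt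
    _ ≤ 2 ^ (Nat.log 2 a + 1) * 2 ^ d :=
        Nat.mul_le_mul_right _ (Nat.lt_pow_succ_log_self one_lt_two a)
    _ = 2 ^ (Nat.log 2 a + 1 + d) := by rw [← pow_add]
    _ ≤ 2 ^ (Nat.log 2 a + d + 1) := by rw [Nat.add_right_comm]

lemma desc_split {a x : ℕ} (ha : a ≠ 0) :
    Desc a x ↔ x = a ∨ Desc (2 * a) x ∨ Desc (2 * a + 1) x := by
  constructor
  · rintro ⟨d, hd⟩
    cases d with
    | zero => left; simpa using hd
    | succ d =>
      right
      have h : x / 2 ^ d / 2 = a := by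
        rw [Nat.div_div_eq_div_mul, ← pow_succ]; exact hd
      set y := x / 2 ^ d with hy
      have : y = 2 * a ∨ y = 2 * a + 1 := by omega
      rcases this with h' | h'
      · exact Or.inl ⟨d, h'⟩
      · exact Or.inr ⟨d, h'⟩
  · rintro (rfl | ⟨d, hd⟩ | ⟨d, hd⟩)
    · exact ⟨0, by simp⟩
    · exact ⟨d + 1, by rw [pow_succ, ← Nat.div_div_eq_div_mul, hd]; omega⟩
    · exact ⟨d + 1, by rw [pow_succ, ← Nat.div_div_eq_div_mul, hd]; omega⟩

lemma desc_not_both {a x : ℕ} (ha : a ≠ 0) (hx : x ≠ 0) :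
    ¬ (Desc (2 * a) x ∧ Desc (2 * a + 1) x) := by
  rintro ⟨⟨d, hd⟩, ⟨e, he⟩⟩
  have l1 := log_of_desc (by omega : 2 * a ≠ 0) hd
  have l2 := log_of_desc (by omega : 2 * a + 1 ≠ 0) he
  have e1 : Nat.log 2 (2 * a) = Nat.log 2 a + 1 := log_two_mul ha
  have e2 : Nat.log 2 (2 * a + 1) = Nat.log 2 a + 1 := log_two_mul_add_one ha
  have : d = e := by omega
  subst this
  omega

lemma desc_self_not {a : ℕ} (ha : a ≠ 0) :
    ¬ Desc (2 * a) a ∧ ¬ Desc (2 * a + 1) a := by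
  constructor
  · rintro ⟨d, hd⟩
    have := log_of_desc (by omega : 2 * a ≠ 0) hd
    have := log_two_mul ha
    omega
  · rintro ⟨d, hd⟩
    have := log_of_desc (by omega : 2 * a + 1 ≠ 0) hd
    have := log_two_mul_add_one ha
    omega

lemma desc_one {x : ℕ} (hx : x ≠ 0) : Desc 1 x := by
  refine ⟨Nat.log 2 x, ?_⟩
  have h1 := Nat.pow_log_le_self 2 hx
  have h2 := Nat.lt_pow_succ_log_self one_lt_two x
  rw [pow_succ] at h2
  exact Nat.div_eq_of_lt_le (by simpa using h1) (by omega)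

section Cnt
variable {N : ℕ}

/-- number of elements of `W` in the subtree rooted at succ-coordinate `a`. -/
def cnt (W : Finset (Fin N)) (a : ℕ) : ℕ :=
  (W.filter (fun w => Desc a (w.val + 1))).card

lemma cnt_split (W : Finset (Fin N)) {a : ℕ} (ha : a ≠ 0) :
    cnt W a = (W.filter (fun w => w.val + 1 = a)).card
      + cnt W (2 * a) + cnt W (2 * a + 1) := by
  unfold cnt
  have h1 : W.filter (fun w => Desc a (w.val + 1)) =
      W.filter (fun w => (w.val + 1 = a) ∨
        (Desc (2 * a) (w.val + 1) ∨ Desc (2 * a + 1) (w.val + 1))) := by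
    apply Finset.filter_congr
    intro w _
    exact desc_split ha
  rw [h1, Finset.filter_or, Finset.filter_or]
  rw [Finset.card_union_of_disjoint, Finset.card_union_of_disjoint, add_assoc]
  · rw [Finset.disjoint_left]
    intro w hw hw'
    simp only [Finset.mem_filter] at hw hw'
    exact (desc_not_both ha (by omega)) ⟨hw.2, hw'.2⟩
  · rw [Finset.disjoint_left]
    intro w hw hw'
    simp only [Finset.mem_filter, Finset.mem_union] at hw hw'
    have hs := desc_self_not (a := a) ha
    rcases hw' with ⟨_, h'⟩ | ⟨_, h'⟩
    · exact hs.1 (hw.2 ▸ h')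
    · exact hs.2 (hw.2 ▸ h')

lemma cnt_zero_of_lt (W : Finset (Fin N)) {a : ℕ} (ha : N < a) : cnt W a = 0 := by
  unfold cnt
  rw [Finset.card_eq_zero, Finset.filter_false_of_mem]
  intro w _ hd
  have := desc_le hd
  have := w.isLt
  omega

lemma cnt_one (W : Finset (Fin N)) : cnt W 1 = W.card := by
  unfold cnt
  rw [Finset.filter_true_of_mem]
  intro w _
  exact desc_one (by omega)

lemma card_filter_self (W : Finset (Fin N)) (w : Fin N) :
    (W.filter (fun u => u.val + 1 = w.val + 1)).card = if w ∈ W then 1 else 0 := by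
  have h1 : W.filter (fun u => u.val + 1 = w.val + 1) = W.filter (fun (u : Fin N) => u = w) := by
    apply Finset.filter_congr
    intro u _
    constructor
    · intro h; exact Fin.val_injective (by omega)
    · rintro rfl; rfl
  rw [h1, Finset.filter_eq']
  split <;> simp

end Cnt

section Graph
variable {h : ℕ}

lemma adj_iff {u v : Fin (2 ^ (h + 1) - 1)} :
    (perfectBinaryTree h).Adj u v ↔
      ((v : ℕ) + 1 = 2 * ((u : ℕ) + 1) ∨ (v : ℕ) + 1 = 2 * ((u : ℕ) + 1) + 1 ∨
       (u : ℕ) + 1 = 2 * ((v : ℕ) + 1) ∨ (u : ℕ) + 1 = 2 * ((v : ℕ) + 1) + 1) := by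
  rw [perfectBinaryTree, SimpleGraph.fromRel_adj]
  have hne : u ≠ v ↔ (u : ℕ) ≠ (v : ℕ) := by
    constructor
    · intro h' h''; exact h' (Fin.val_injective h'')
    · intro h' h''; exact h' (congrArg Fin.val h'')
  rw [hne]
  omega

end Graph

section MaxInd
variable {V : Type*} {G : SimpleGraph V} {W : Finset V}

lemma dom_of_maximal [DecidableEq V] (hW : G.IsMaximalIndepSet W) (v : V) :
    v ∈ W ∨ ∃ u ∈ W, G.Adj u v := by
  by_contra hc
  push_neg at hc
  obtain ⟨hv, hu⟩ := hc
  apply hW.2 (insert v W) (Finset.ssubset_insert hv)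
  intro a ha b hb hadj
  rcases Finset.mem_insert.1 ha with rfl | ha'
  · rcases Finset.mem_insert.1 hb with rfl | hb'
    · exact G.loopless.irrefl _ hadj
    · exact hu b hb' hadj.symm
  · rcases Finset.mem_insert.1 hb with rfl | hb'
    · exact hu a ha' hadj
    · exact hW.1 a ha' b hb' hadj

lemma maximal_of_indep_dom (hind : G.IsIndepSet' W)
    (hdom : ∀ v, v ∈ W ∨ ∃ u ∈ W, G.Adj u v) : G.IsMaximalIndepSet W := by
  refine ⟨hind, fun D hD hDind => ?_⟩
  obtain ⟨x, hxD, hxW⟩ := Finset.exists_of_ssubset hD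
  rcases hdom x with hx | ⟨u, huW, hadj⟩
  · exact hxW hx
  · exact hDind u (hD.subset huW) x hxD hadj

end MaxInd

/-! ### The DP values -/

def ABC : ℕ → ℕ × ℕ × ℕ
  | 0 => (1, 1, 0)
  | (k+1) => (1 + 2 * min (ABC k).2.1 (ABC k).2.2,
              (ABC k).1 + min (ABC k).1 (ABC k).2.1,
              2 * (ABC k).2.1)

def bval : ℕ → ℕ
  | 0 => 2
  | (m+1) => 8 * bval m + 2

lemma seven_bval (m : ℕ) : 7 * bval m = 2 * (8 ^ (m + 1) - 1) := by
  induction m with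
  | zero => simp [bval]
  | succ m ih =>
    have h1 : (8:ℕ) ^ (m + 1 + 1) = 8 * 8 ^ (m + 1) := by rw [pow_succ]; ring
    have h2 : (1:ℕ) ≤ 8 ^ (m + 1) := Nat.one_le_pow _ _ (by norm_num)
    simp only [bval]
    omega

lemma ABC_triple (j : ℕ) :
    ABC (3 * j + 2) = (bval j + 3, bval j, bval j + 2) := by
  induction j with
  | zero => decide
  | succ j ih =>
    have e : 3 * (j + 1) + 2 = 3 * j + 2 + 1 + 1 + 1 := by ring
    have h1 : ∀ n, ABC (n + 1) = (1 + 2 * min (ABC n).2.1 (ABC n).2.2,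
        (ABC n).1 + min (ABC n).1 (ABC n).2.1, 2 * (ABC n).2.1) := fun n => rfl
    rw [e, h1, h1, h1, ih]
    simp only [bval, Prod.mk.injEq]
    refine ⟨by omega, by omega, by omega⟩

/-! ### The main induction -/

lemma exists_child_in_W {h : ℕ} {W : Finset (Fin (2 ^ (h + 1) - 1))}
    (hdom : ∀ v, v ∈ W ∨ ∃ u ∈ W, (perfectBinaryTree h).Adj u v)
    {w c : Fin (2 ^ (h + 1) - 1)}
    (hpar : (c : ℕ) + 1 = 2 * ((w : ℕ) + 1) ∨ (c : ℕ) + 1 = 2 * ((w : ℕ) + 1) + 1)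
    (hw : w ∉ W) (hc : c ∉ W) :
    ∃ u ∈ W, (u : ℕ) + 1 = 2 * ((c : ℕ) + 1) ∨ (u : ℕ) + 1 = 2 * ((c : ℕ) + 1) + 1 := by
  rcases hdom c with h' | ⟨u, huW, hadj⟩
  · exact absurd h' hc
  rw [adj_iff] at hadj
  rcases hadj with h1 | h1 | h1 | h1
  · have : (u : ℕ) = (w : ℕ) := by omega
    exact absurd (Fin.val_injective this ▸ huW) hw
  · have : (u : ℕ) = (w : ℕ) := by omega
    exact absurd (Fin.val_injective this ▸ huW) hw
  · exact ⟨u, huW, Or.inl h1⟩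
  · exact ⟨u, huW, Or.inr h1⟩

lemma main_induction {h : ℕ} {W : Finset (Fin (2 ^ (h + 1) - 1))}
    (hind : (perfectBinaryTree h).IsIndepSet' W)
    (hdom : ∀ v, v ∈ W ∨ ∃ u ∈ W, (perfectBinaryTree h).Adj u v) :
    ∀ k, ∀ w : Fin (2 ^ (h + 1) - 1),
      2 ^ h ≤ ((w : ℕ) + 1) * 2 ^ k → ((w : ℕ) + 1) * 2 ^ k < 2 ^ (h + 1) →
      ((w ∈ W → (ABC k).1 ≤ cnt W ((w : ℕ) + 1)) ∧
       ((w ∉ W ∧ ∃ u ∈ W, (u : ℕ) + 1 = 2 * ((w : ℕ) + 1) ∨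
            (u : ℕ) + 1 = 2 * ((w : ℕ) + 1) + 1) → (ABC k).2.1 ≤ cnt W ((w : ℕ) + 1)) ∧
       ((w ∉ W ∧ ¬ ∃ u ∈ W, (u : ℕ) + 1 = 2 * ((w : ℕ) + 1) ∨
            (u : ℕ) + 1 = 2 * ((w : ℕ) + 1) + 1) → (ABC k).2.2 ≤ cnt W ((w : ℕ) + 1))) := by
  intro k
  induction k with
  | zero =>
    intro w hlo hhi
    have hpw : (2:ℕ) ^ (h + 1) = 2 * 2 ^ h := by rw [pow_succ]; ring
    simp only [pow_zero, mul_one] at hlo hhi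
    have hsplit := cnt_split W (a := (w : ℕ) + 1) (by omega)
    have hz1 : cnt W (2 * ((w : ℕ) + 1)) = 0 := cnt_zero_of_lt W (by omega)
    have hz2 : cnt W (2 * ((w : ℕ) + 1) + 1) = 0 := cnt_zero_of_lt W (by omega)
    have hself := card_filter_self W w
    refine ⟨?_, ?_, ?_⟩
    · intro hw
      rw [hsplit, hz1, hz2, hself, if_pos hw]
      simp [ABC]
    · rintro ⟨-, u, huW, hu⟩
      have := u.isLt
      omega
    · rintro ⟨hw, -⟩
      rw [hsplit, hz1, hz2, hself, if_neg hw]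
      simp [ABC]
  | succ k ih =>
    intro w hlo hhi
    set a := (w : ℕ) + 1 with ha
    have ha1 : 1 ≤ a := by omega
    have hpw : (2:ℕ) ^ (h + 1) = 2 * 2 ^ h := by rw [pow_succ]; ring
    have hps : (2:ℕ) ^ (k + 1) = 2 ^ k * 2 := pow_succ 2 k
    have hk1 : (1:ℕ) ≤ 2 ^ k := Nat.one_le_pow _ _ (by norm_num)
    have hkh : k + 1 ≤ h := by
      by_contra hcon
      have h2 : (2:ℕ) ^ (h + 1) ≤ 2 ^ (k + 1) := Nat.pow_le_pow_right (by norm_num) (by omega)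
      have h3 : (2:ℕ) ^ (k + 1) ≤ a * 2 ^ (k + 1) := Nat.le_mul_of_pos_left _ (by omega)
      omega
    have e1 : (2 * a) * 2 ^ k = a * 2 ^ (k + 1) := by rw [hps]; ring
    have hc1lo : 2 ^ h ≤ (2 * a) * 2 ^ k := by omega
    have hc1hi : (2 * a) * 2 ^ k < 2 ^ (h + 1) := by omega
    have haup : a < 2 ^ (h - k) := by
      have hd : (2:ℕ) ^ (h + 1) = 2 ^ (h - k) * 2 ^ (k + 1) := by
        rw [← pow_add]
        congr 1
        omega
      by_contra hcon
      have : (2:ℕ) ^ (h - k) * 2 ^ (k + 1) ≤ a * 2 ^ (k + 1) :=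
        Nat.mul_le_mul_right _ (by omega)
      omega
    have hc2hi : (2 * a + 1) * 2 ^ k < 2 ^ (h + 1) := by
      have e2 : (2 * a + 1) * 2 ^ k = a * 2 ^ (k + 1) + 2 ^ k := by rw [hps]; ring
      have e3 : (a + 1) * 2 ^ (k + 1) = a * 2 ^ (k + 1) + 2 ^ (k + 1) := by ring
      have key : (a + 1) * 2 ^ (k + 1) ≤ 2 ^ (h - k) * 2 ^ (k + 1) :=
        Nat.mul_le_mul_right _ (by omega)
      have hd : (2:ℕ) ^ (h - k) * 2 ^ (k + 1) = 2 ^ (h + 1) := by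
        rw [← pow_add]
        congr 1
        omega
      omega
    have hc2lo : 2 ^ h ≤ (2 * a + 1) * 2 ^ k := by
      have : (2 * a) * 2 ^ k ≤ (2 * a + 1) * 2 ^ k := Nat.mul_le_mul_right _ (by omega)
      omega
    have h2a : 2 * a < 2 ^ (h + 1) := by
      have : 2 * a ≤ (2 * a) * 2 ^ k := Nat.le_mul_of_pos_right _ (by omega)
      omega
    -- children
    obtain ⟨c1, hc1v⟩ : ∃ c : Fin (2 ^ (h + 1) - 1), (c : ℕ) + 1 = 2 * a := by
      have hb : 2 * (w : ℕ) + 1 < 2 ^ (h + 1) - 1 := by omega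
      exact ⟨⟨_, hb⟩, by show 2 * (w : ℕ) + 1 + 1 = 2 * a; omega⟩
    obtain ⟨c2, hc2v⟩ : ∃ c : Fin (2 ^ (h + 1) - 1), (c : ℕ) + 1 = 2 * a + 1 := by
      have hb : 2 * (w : ℕ) + 2 < 2 ^ (h + 1) - 1 := by omega
      exact ⟨⟨_, hb⟩, by show 2 * (w : ℕ) + 2 + 1 = 2 * a + 1; omega⟩
    have hadj1 : (perfectBinaryTree h).Adj w c1 := adj_iff.2 (by omega)
    have hadj2 : (perfectBinaryTree h).Adj w c2 := adj_iff.2 (by omega)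
    have IH1 := ih c1 (by rw [hc1v]; exact hc1lo) (by rw [hc1v]; exact hc1hi)
    have IH2 := ih c2 (by rw [hc2v]; exact hc2lo) (by rw [hc2v]; exact hc2hi)
    rw [hc1v] at IH1
    rw [hc2v] at IH2
    have hsplit := cnt_split W (a := a) (by omega)
    have hself := card_filter_self W w
    have hA : (ABC (k + 1)).1 = 1 + 2 * min (ABC k).2.1 (ABC k).2.2 := rfl
    have hB : (ABC (k + 1)).2.1 = (ABC k).1 + min (ABC k).1 (ABC k).2.1 := rfl
    have hC : (ABC (k + 1)).2.2 = 2 * (ABC k).2.1 := rfl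
    refine ⟨?_, ?_, ?_⟩
    · -- w ∈ W
      intro hw
      have hc1W : c1 ∉ W := fun hcW => hind w hw c1 hcW hadj1
      have hc2W : c2 ∉ W := fun hcW => hind w hw c2 hcW hadj2
      have b1 : min (ABC k).2.1 (ABC k).2.2 ≤ cnt W (2 * a) := by
        by_cases hch : ∃ u ∈ W, (u : ℕ) + 1 = 2 * (2 * a) ∨ (u : ℕ) + 1 = 2 * (2 * a) + 1
        · exact le_trans (min_le_left _ _) (IH1.2.1 ⟨hc1W, hch⟩)
        · exact le_trans (min_le_right _ _) (IH1.2.2 ⟨hc1W, hch⟩)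
      have b2 : min (ABC k).2.1 (ABC k).2.2 ≤ cnt W (2 * a + 1) := by
        by_cases hch : ∃ u ∈ W, (u : ℕ) + 1 = 2 * (2 * a + 1) ∨ (u : ℕ) + 1 = 2 * (2 * a + 1) + 1
        · exact le_trans (min_le_left _ _) (IH2.2.1 ⟨hc2W, hch⟩)
        · exact le_trans (min_le_right _ _) (IH2.2.2 ⟨hc2W, hch⟩)
      rw [hsplit, hself, if_pos hw]
      omega
    · -- w ∉ W, some child in W
      rintro ⟨hw, u, huW, hu⟩
      have hu' : u = c1 ∨ u = c2 := by
        rcases hu with h' | h'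
        · exact Or.inl (Fin.val_injective (by omega))
        · exact Or.inr (Fin.val_injective (by omega))
      rw [hsplit, hself, if_neg hw]
      rcases hu' with rfl | rfl
      · have bA : (ABC k).1 ≤ cnt W (2 * a) := IH1.1 huW
        have bO : min (ABC k).1 (ABC k).2.1 ≤ cnt W (2 * a + 1) := by
          by_cases hc2W : c2 ∈ W
          · exact le_trans (min_le_left _ _) (IH2.1 hc2W)
          · have hch := exists_child_in_W hdom (Or.inr hc2v) hw hc2W
            rw [hc2v] at hch
            exact le_trans (min_le_right _ _) (IH2.2.1 ⟨hc2W, hch⟩)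
        omega
      · have bA : (ABC k).1 ≤ cnt W (2 * a + 1) := IH2.1 huW
        have bO : min (ABC k).1 (ABC k).2.1 ≤ cnt W (2 * a) := by
          by_cases hc1W : c1 ∈ W
          · exact le_trans (min_le_left _ _) (IH1.1 hc1W)
          · have hch := exists_child_in_W hdom (Or.inl hc1v) hw hc1W
            rw [hc1v] at hch
            exact le_trans (min_le_right _ _) (IH1.2.1 ⟨hc1W, hch⟩)
        omega
    · -- w ∉ W, no child in W
      rintro ⟨hw, hnoch⟩
      have hc1W : c1 ∉ W := fun hcW => hnoch ⟨c1, hcW, Or.inl hc1v⟩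
      have hc2W : c2 ∉ W := fun hcW => hnoch ⟨c2, hcW, Or.inr hc2v⟩
      have hch1 := exists_child_in_W hdom (Or.inl hc1v) hw hc1W
      have hch2 := exists_child_in_W hdom (Or.inr hc2v) hw hc2W
      rw [hc1v] at hch1
      rw [hc2v] at hch2
      have b1 : (ABC k).2.1 ≤ cnt W (2 * a) := IH1.2.1 ⟨hc1W, hch1⟩
      have b2 : (ABC k).2.1 ≤ cnt W (2 * a + 1) := IH2.2.1 ⟨hc2W, hch2⟩
      rw [hsplit, hself, if_neg hw]
      omega

lemma lower_bound {h : ℕ} {W : Finset (Fin (2 ^ (h + 1) - 1))}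
    (hW : (perfectBinaryTree h).IsMaximalIndepSet W) :
    min (ABC h).1 (ABC h).2.1 ≤ W.card := by
  have hdom : ∀ v, v ∈ W ∨ ∃ u ∈ W, (perfectBinaryTree h).Adj u v :=
    fun v => dom_of_maximal hW v
  have hN : 0 < 2 ^ (h + 1) - 1 := by
    have h2 : (2:ℕ) ≤ 2 ^ (h + 1) := by
      calc (2:ℕ) = 2 ^ 1 := rfl
      _ ≤ 2 ^ (h + 1) := Nat.pow_le_pow_right (by norm_num) (by omega)
    omega
  set w0 : Fin (2 ^ (h + 1) - 1) := ⟨0, hN⟩ with hw0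
  have hv0 : (w0 : ℕ) + 1 = 1 := rfl
  have hpw : (2:ℕ) ^ (h + 1) = 2 * 2 ^ h := by rw [pow_succ]; ring
  have h0 := main_induction hW.1 hdom h w0 (by rw [hv0]; omega) (by rw [hv0]; omega)
  rw [hv0] at h0
  rw [← cnt_one W]
  by_cases hin : w0 ∈ W
  · exact le_trans (min_le_left _ _) (h0.1 hin)
  · rcases hdom w0 with h' | ⟨u, huW, hadj⟩
    · exact absurd h' hin
    · rw [adj_iff] at hadj
      rw [hv0] at hadj
      have hch : ∃ u ∈ W, (u : ℕ) + 1 = 2 * 1 ∨ (u : ℕ) + 1 = 2 * 1 + 1 := by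
        refine ⟨u, huW, ?_⟩
        omega
      exact le_trans (min_le_right _ _) (h0.2.1 ⟨hin, hch⟩)

/-! ### The explicit optimal set: vertices at levels ≡ 1 mod 3 -/

def levelSet (h : ℕ) : Finset (Fin (2 ^ (h + 1) - 1)) :=
  Finset.univ.filter (fun v => Nat.log 2 ((v : ℕ) + 1) % 3 = 1)

lemma levelSet_indep (h : ℕ) : (perfectBinaryTree h).IsIndepSet' (levelSet h) := by
  intro u hu v hv hadj
  simp only [levelSet, Finset.mem_filter] at hu hv
  rw [adj_iff] at hadj
  rcases hadj with h1 | h1 | h1 | h1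
  · have := log_two_mul (a := (u : ℕ) + 1) (by omega)
    rw [← h1] at this
    omega
  · have := log_two_mul_add_one (a := (u : ℕ) + 1) (by omega)
    rw [← h1] at this
    omega
  · have := log_two_mul (a := (v : ℕ) + 1) (by omega)
    rw [← h1] at this
    omega
  · have := log_two_mul_add_one (a := (v : ℕ) + 1) (by omega)
    rw [← h1] at this
    omega

lemma levelSet_dom {h : ℕ} (hh : h % 3 = 2) :
    ∀ v, v ∈ levelSet h ∨ ∃ u ∈ levelSet h, (perfectBinaryTree h).Adj u v := by
  intro v
  set x := (v : ℕ) + 1 with hx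
  have hx1 : 1 ≤ x := by omega
  have hxlt : x < 2 ^ (h + 1) := by
    have := v.isLt
    omega
  set t := Nat.log 2 x with ht
  have htle : t ≤ h := by
    have := Nat.log_lt_of_lt_pow (b := 2) (by omega : x ≠ 0) hxlt
    omega
  by_cases h1 : t % 3 = 1
  · exact Or.inl (Finset.mem_filter.2 ⟨Finset.mem_univ _, h1⟩)
  right
  have hpw : (2:ℕ) ^ (h + 1) = 2 * 2 ^ h := by rw [pow_succ]; ring
  by_cases h0 : t % 3 = 0
  · -- go to a child
    have hth : t + 1 ≤ h := by omega
    have hxh : x < 2 ^ h := by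
      have h2 : x < 2 ^ (t + 1) := Nat.lt_pow_succ_log_self one_lt_two x
      have h3 : (2:ℕ) ^ (t + 1) ≤ 2 ^ h := Nat.pow_le_pow_right (by norm_num) hth
      omega
    have hb : 2 * (v : ℕ) + 1 < 2 ^ (h + 1) - 1 := by omega
    refine ⟨⟨2 * (v : ℕ) + 1, hb⟩, ?_, ?_⟩
    · apply Finset.mem_filter.2
      refine ⟨Finset.mem_univ _, ?_⟩
      have he : (2 * (v : ℕ) + 1) + 1 = 2 * x := by omega
      show Nat.log 2 ((2 * (v : ℕ) + 1) + 1) % 3 = 1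
      rw [he, log_two_mul (by omega)]
      omega
    · rw [adj_iff]
      show _ ∨ _
      right; right; left
      show 2 * (v : ℕ) + 1 + 1 = 2 * ((v : ℕ) + 1)
      omega
  · -- t % 3 = 2 : go to the parent
    have h2 : t % 3 = 2 := by omega
    have ht2 : 2 ≤ t := by omega
    have hxge : 2 ^ t ≤ x := Nat.pow_log_le_self 2 (by omega)
    have h4x : 4 ≤ x := by
      have : (2:ℕ) ^ 2 ≤ 2 ^ t := Nat.pow_le_pow_right (by norm_num) ht2
      omega
    set q := x / 2 with hq
    have hdm := Nat.div_add_mod x 2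
    have hmod : x % 2 < 2 := Nat.mod_lt x (by norm_num)
    have hq2 : 2 ≤ q := by omega
    have hb : q - 1 < 2 ^ (h + 1) - 1 := by omega
    have hlog : Nat.log 2 q = t - 1 := by
      have hcase : x = 2 * q ∨ x = 2 * q + 1 := by omega
      rcases hcase with hc | hc
      · have := log_two_mul (a := q) (by omega)
        rw [← hc] at this
        omega
      · have := log_two_mul_add_one (a := q) (by omega)
        rw [← hc] at this
        omega
    refine ⟨⟨q - 1, hb⟩, ?_, ?_⟩
    · apply Finset.mem_filter.2
      refine ⟨Finset.mem_univ _, ?_⟩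
      show Nat.log 2 ((q - 1) + 1) % 3 = 1
      have he : (q - 1) + 1 = q := by omega
      rw [he, hlog]
      omega
    · rw [adj_iff]
      show (v : ℕ) + 1 = 2 * ((q - 1) + 1) ∨ (v : ℕ) + 1 = 2 * ((q - 1) + 1) + 1 ∨ _ ∨ _
      have he : (q - 1) + 1 = q := by omega
      rw [he]
      omega

/-! ### Cardinality of the level set -/

lemma card_range_filter_log (H : ℕ) :
    ((Finset.range (2 ^ (H + 1) - 1)).filter (fun x => Nat.log 2 (x + 1) % 3 = 1)).card
      = ∑ t ∈ Finset.range (H + 1), if t % 3 = 1 then 2 ^ t else 0 := by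
  induction H with
  | zero =>
    rw [show (2:ℕ) ^ (0 + 1) - 1 = 1 from rfl, Finset.range_one, Finset.filter_singleton]
    norm_num [Nat.log_one_right, Finset.sum_range_one]
  | succ H ih =>
    have hn1 : (2:ℕ) ^ (H + 1) ≥ 1 := Nat.one_le_pow _ _ (by norm_num)
    have hn2 : (2:ℕ) ^ (H + 2) = 2 * 2 ^ (H + 1) := by rw [pow_succ]; ring
    have hsplit : Finset.range (2 ^ (H + 2) - 1)
        = Finset.range (2 ^ (H + 1) - 1) ∪
          Finset.Ico (2 ^ (H + 1) - 1) (2 ^ (H + 2) - 1) := by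
      rw [Finset.range_eq_Ico, Finset.range_eq_Ico,
        Finset.Ico_union_Ico_eq_Ico (by omega) (by omega)]
    rw [hsplit, Finset.filter_union, Finset.card_union_of_disjoint, ih]
    · have hIco : ∀ x ∈ Finset.Ico (2 ^ (H + 1) - 1) (2 ^ (H + 2) - 1),
          Nat.log 2 (x + 1) = H + 1 := by
        intro x hxmem
        rw [Finset.mem_Ico] at hxmem
        exact Nat.log_eq_of_pow_le_of_lt_pow (by omega) (by omega)
      have hcard : (Finset.Ico (2 ^ (H + 1) - 1) (2 ^ (H + 2) - 1)).card = 2 ^ (H + 1) := by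
        rw [Nat.card_Ico]
        omega
      conv_rhs => rw [Finset.sum_range_succ]
      by_cases hmod : (H + 1) % 3 = 1
      · rw [Finset.filter_true_of_mem (fun x hxmem => (hIco x hxmem).symm ▸ hmod), hcard,
          if_pos hmod]
      · rw [Finset.filter_false_of_mem
          (fun x hxmem => (hIco x hxmem).symm ▸ hmod), if_neg hmod, Finset.card_empty]
    · rw [Finset.disjoint_left]
      intro x hx hx'
      simp only [Finset.mem_filter, Finset.mem_range, Finset.mem_Ico] at hx hx'
      omega

lemma card_levelSet_aux (h : ℕ) :
    (levelSet h).card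
      = ∑ t ∈ Finset.range (h + 1), if t % 3 = 1 then 2 ^ t else 0 := by
  rw [← card_range_filter_log h]
  refine Finset.card_bij (fun v _ => (v : ℕ)) ?_ ?_ ?_
  · intro v hv
    simp only [levelSet, Finset.mem_filter, Finset.mem_univ, true_and] at hv
    simp only [Finset.mem_filter, Finset.mem_range]
    exact ⟨v.isLt, hv⟩
  · intro u _ v _ huv
    exact Fin.val_injective huv
  · intro x hxmem
    simp only [Finset.mem_filter, Finset.mem_range] at hxmem
    refine ⟨⟨x, hxmem.1⟩, ?_, rfl⟩
    simp only [levelSet, Finset.mem_filter, Finset.mem_univ, true_and]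
    exact hxmem.2

lemma sum_levels (m : ℕ) :
    (∑ t ∈ Finset.range (3 * m + 3), if t % 3 = 1 then (2:ℕ) ^ t else 0) = bval m := by
  induction m with
  | zero => decide
  | succ m ih =>
    have e : 3 * (m + 1) + 3 = (3 * m + 3) + 1 + 1 + 1 := by ring
    rw [e, Finset.sum_range_succ, Finset.sum_range_succ, Finset.sum_range_succ, ih]
    have c1 : (3 * m + 3) % 3 = 0 := by omega
    have c2 : (3 * m + 3 + 1) % 3 = 1 := by omega
    have c3 : (3 * m + 3 + 1 + 1) % 3 = 2 := by omega
    simp only [c1, c2, c3]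
    norm_num
    have h8 : (8:ℕ) ^ (m + 1) = 2 ^ (3 * (m + 1)) := by
      rw [show (8:ℕ) = 2 ^ 3 from rfl, ← pow_mul]
    have h2 : (2:ℕ) ^ (3 * m + 4) = 2 ^ (3 * (m + 1)) * 2 := by
      rw [show 3 * m + 4 = 3 * (m + 1) + 1 by ring, pow_succ]
    have h7 := seven_bval m
    have h81 : (1:ℕ) ≤ 8 ^ (m + 1) := Nat.one_le_pow _ _ (by norm_num)
    simp only [bval]
    omega

lemma card_levelSet (m : ℕ) : (levelSet (3 * m + 2)).card = bval m := by
  rw [card_levelSet_aux, show 3 * m + 2 + 1 = 3 * m + 3 from rfl, sum_levels]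

end PBTaux

/-- For a perfect binary tree of height h = 3m+2, the minimum size of a
maximal independent set is 2*(8^(m+1) - 1)/7. -/
theorem minMaximalIndepSetSize_perfectBinaryTree_height_three_mul_add_two (m : ℕ) :
    7 * (perfectBinaryTree (3 * m + 2)).minMaximalIndepSetSize = 2 * (8 ^ (m + 1) - 1) := by
  have hmem : PBTaux.bval m ∈ {k | ∃ W : Finset (Fin (2 ^ (3 * m + 2 + 1) - 1)),
      (perfectBinaryTree (3 * m + 2)).IsMaximalIndepSet W ∧ W.card = k} :=
    ⟨PBTaux.levelSet (3 * m + 2),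
      PBTaux.maximal_of_indep_dom (PBTaux.levelSet_indep _)
        (PBTaux.levelSet_dom (by omega)),
      PBTaux.card_levelSet m⟩
  have key : (perfectBinaryTree (3 * m + 2)).minMaximalIndepSetSize = PBTaux.bval m := by
    unfold SimpleGraph.minMaximalIndepSetSize
    apply le_antisymm
    · exact Nat.sInf_le hmem
    · refine le_csInf ⟨_, hmem⟩ ?_
      rintro k ⟨W, hW, rfl⟩
      have hlb := PBTaux.lower_bound hW
      rw [PBTaux.ABC_triple m] at hlb
      simp only [Prod.fst, Prod.snd] at hlb
      omega
  rw [key, PBTaux.seven_bval]
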